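/- The Gluck re-gluing of the standard decomposition of S^4 again yields a space homeomorphic to S^4: let j₁ : S^2 × S^1 → B^3 × S^1 and j₂ : S^2 × S^1 → S^2 × D^2 be the two boundary inclusions (induced by S^2 = ∂B^3 ⊆ B^3 and S^1 = ∂D^2 ⊆ D^2), and let g : S^2 × S^1 → S^2 × S^1 be the Gluck twist g(x, z) = (R(z)·x, z), where R(z) ∈ SO(3) is the rotation of ℝ^3 by angle arg z about the third coordinate axis. Then the pushout in the category of topological spaces of (j₁ ∘ g, j₂) is homeomorphic to the 4-sphere S^4. -/

import Mathlib

/-!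
The Gluck re-gluing of the standard decomposition
`S⁴ = (B³ × S¹) ∪_{S² × S¹} (S² × D²)`: the pushout of the maps
`j₁ ∘ g : S² × S¹ → B³ × S¹` and `j₂ : S² × S¹ → S² × D²`, where `g` is the
Gluck twist `g(x, z) = (R(z)·x, z)`, is again homeomorphic to the 4-sphere.
-/

open CategoryTheory Limits

/-- The closed unit ball in `ℝ³`. -/
def B3 : Set (EuclideanSpace ℝ (Fin 3)) := Metric.closedBall 0 1

/-- The unit 2-sphere `∂B³` in `ℝ³`. -/
def S2 : Set (EuclideanSpace ℝ (Fin 3)) := Metric.sphere 0 1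

/-- The closed unit disk in `ℂ`. -/
def D2 : Set ℂ := Metric.closedBall 0 1

/-- The unit circle `∂D²` in `ℂ`. -/
def S1 : Set ℂ := Metric.sphere 0 1

/-- The unit 4-sphere in `ℝ⁵`. -/
def S4 : Set (EuclideanSpace ℝ (Fin 5)) := Metric.sphere 0 1

/-- `rot z` is the rotation `R(z)` of `ℝ³` by the angle `arg z` about the third
coordinate axis: it rotates the `(x₀, x₁)`-plane by `arg z` (i.e. acts there as
multiplication by `z = e^{i arg z}`) and fixes the third axis. -/
noncomputable def rot (z : ℂ) (x : EuclideanSpace ℝ (Fin 3)) : EuclideanSpace ℝ (Fin 3) :=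
  (WithLp.equiv 2 (Fin 3 → ℝ)).symm
    ![z.re * x 0 - z.im * x 1, z.im * x 0 + z.re * x 1, x 2]

lemma norm_sq_eq_one_of_mem_S1 {z : ℂ} (hz : z ∈ S1) : z.re ^ 2 + z.im ^ 2 = 1 := by
  have h1 : ‖z‖ = 1 := mem_sphere_zero_iff_norm.mp hz
  have h2 : Complex.normSq z = 1 := by
    rw [Complex.normSq_eq_norm_sq, h1]; norm_num
  rw [Complex.normSq_apply] at h2; nlinarith [h2]

lemma sum_sq_eq_one_of_mem_S2 {x : EuclideanSpace ℝ (Fin 3)} (hx : x ∈ S2) :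
    x 0 ^ 2 + x 1 ^ 2 + x 2 ^ 2 = 1 := by
  have h1 : ‖x‖ = 1 := mem_sphere_zero_iff_norm.mp hx
  rw [EuclideanSpace.norm_eq, Real.sqrt_eq_one] at h1
  simpa [Fin.sum_univ_three, Real.norm_eq_abs, sq_abs] using h1

/-- The rotation `R(z)` preserves the unit sphere. -/
lemma rot_mem_sphere {z : ℂ} (hz : z ∈ S1) {x : EuclideanSpace ℝ (Fin 3)} (hx : x ∈ S2) :
    rot z x ∈ S2 := by
  have hz' := norm_sq_eq_one_of_mem_S1 hz
  have hx' := sum_sq_eq_one_of_mem_S2 hx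
  show rot z x ∈ Metric.sphere 0 1
  rw [mem_sphere_zero_iff_norm, EuclideanSpace.norm_eq, Real.sqrt_eq_one]
  simp only [rot, WithLp.equiv_symm_apply, PiLp.toLp_apply, Fin.sum_univ_three, Real.norm_eq_abs, sq_abs]
  simp only [Matrix.cons_val_zero, Matrix.cons_val_one, Matrix.head_cons, Matrix.cons_val_two,
    Matrix.tail_cons]
  nlinarith [hz', hx']

/-- Gluck's twist map `g(x, z) = (R(z)·x, z)` of `S² × S¹`. -/
noncomputable def gluckTwist : ↥S2 × ↥S1 → ↥S2 × ↥S1 := fun p =>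
  (⟨rot p.2 p.1, rot_mem_sphere p.2.2 p.1.2⟩, p.2)

lemma continuous_gluckTwist : Continuous gluckTwist := by
  refine Continuous.prodMk (Continuous.subtype_mk ?_ _) continuous_snd
  refine (PiLp.continuous_toLp 2 (fun _ : Fin 3 => ℝ)).comp ?_
  refine continuous_pi fun i => ?_
  have h0 : Continuous fun p : ↥S2 × ↥S1 => (p.1 : EuclideanSpace ℝ (Fin 3)) :=
    continuous_subtype_val.comp continuous_fst
  have hx : ∀ j : Fin 3, Continuous fun p : ↥S2 × ↥S1 => (p.1 : EuclideanSpace ℝ (Fin 3)) j :=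
    fun j => (continuous_apply j).comp ((PiLp.continuous_ofLp 2 (fun _ : Fin 3 => ℝ)).comp h0)
  have hre : Continuous fun p : ↥S2 × ↥S1 => (p.2 : ℂ).re :=
    Complex.continuous_re.comp (continuous_subtype_val.comp continuous_snd)
  have him : Continuous fun p : ↥S2 × ↥S1 => (p.2 : ℂ).im :=
    Complex.continuous_im.comp (continuous_subtype_val.comp continuous_snd)
  fin_cases i <;> simp [rot] <;> fun_prop


/-! ### Auxiliary geometric lemmas for the proof -/

section GluckAux

lemma rot_apply0' (z : ℂ) (x : EuclideanSpace ℝ (Fin 3)) :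
    rot z x 0 = z.re * x 0 - z.im * x 1 := rfl
lemma rot_apply1' (z : ℂ) (x : EuclideanSpace ℝ (Fin 3)) :
    rot z x 1 = z.im * x 0 + z.re * x 1 := rfl
lemma rot_apply2' (z : ℂ) (x : EuclideanSpace ℝ (Fin 3)) : rot z x 2 = x 2 := rfl

lemma rot_rot (z w : ℂ) (x : EuclideanSpace ℝ (Fin 3)) : rot z (rot w x) = rot (z * w) x := by
  ext i
  fin_cases i <;>
    simp [rot, WithLp.equiv_symm_apply, PiLp.toLp_apply, Complex.mul_re, Complex.mul_im] <;> ring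

lemma rot_one (x : EuclideanSpace ℝ (Fin 3)) : rot 1 x = x := by
  ext i
  fin_cases i <;> simp [rot, WithLp.equiv_symm_apply, PiLp.toLp_apply]

lemma norm_rot {z : ℂ} (hz : ‖z‖ = 1) (x : EuclideanSpace ℝ (Fin 3)) : ‖rot z x‖ = ‖x‖ := by
  have h1 : ‖z‖ = 1 := hz
  have h2 : z.re ^ 2 + z.im ^ 2 = 1 := by
    nlinarith [Complex.normSq_apply z, Complex.normSq_eq_norm_sq z, h1]
  rw [EuclideanSpace.norm_eq, EuclideanSpace.norm_eq]
  congr 1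
  simp only [Fin.sum_univ_three, Real.norm_eq_abs, sq_abs, rot_apply0', rot_apply1', rot_apply2']
  nlinarith [h2]

lemma rot_conj_rot {z : ℂ} (hz : ‖z‖ = 1) (x : EuclideanSpace ℝ (Fin 3)) :
    rot ((starRingEnd ℂ) z) (rot z x) = x := by
  have h : (starRingEnd ℂ) z * z = 1 := by
    rw [mul_comm, Complex.mul_conj, Complex.normSq_eq_norm_sq]
    norm_num [hz]
  rw [rot_rot, h, rot_one]

lemma rot_rot_conj {z : ℂ} (hz : ‖z‖ = 1) (x : EuclideanSpace ℝ (Fin 3)) :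
    rot z (rot ((starRingEnd ℂ) z) x) = x := by
  have h : z * (starRingEnd ℂ) z = 1 := by
    rw [Complex.mul_conj, Complex.normSq_eq_norm_sq]
    norm_num [hz]
  rw [rot_rot, h, rot_one]

/-- The embedding `ℝ³ × ℂ → ℝ⁵`. -/
noncomputable def emb (x : EuclideanSpace ℝ (Fin 3)) (w : ℂ) : EuclideanSpace ℝ (Fin 5) :=
  (WithLp.equiv 2 (Fin 5 → ℝ)).symm ![x 0, x 1, x 2, w.re, w.im]

lemma emb_smul (c : ℝ) (x : EuclideanSpace ℝ (Fin 3)) (w : ℂ) :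
    emb (c • x) (c • w) = c • emb x w := by
  ext i
  fin_cases i <;>
    simp [emb, WithLp.equiv_symm_apply, PiLp.toLp_apply, PiLp.smul_apply, Complex.smul_re, Complex.smul_im,
      smul_eq_mul]

lemma emb_inj {x x' : EuclideanSpace ℝ (Fin 3)} {w w' : ℂ} (h : emb x w = emb x' w') :
    x = x' ∧ w = w' := by
  have h0 := congrFun (congrArg WithLp.ofLp h) 0
  have h1 := congrFun (congrArg WithLp.ofLp h) 1
  have h2 := congrFun (congrArg WithLp.ofLp h) 2
  have h3 := congrFun (congrArg WithLp.ofLp h) 3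
  have h4 := congrFun (congrArg WithLp.ofLp h) 4
  simp only [emb, WithLp.equiv_symm_apply, PiLp.toLp_apply] at h0 h1 h2 h3 h4
  norm_num at h0 h1 h2 h3 h4
  constructor
  · ext i; fin_cases i <;> assumption
  · exact Complex.ext h3 h4

lemma norm_emb (x : EuclideanSpace ℝ (Fin 3)) (w : ℂ) :
    ‖emb x w‖ = Real.sqrt (‖x‖ ^ 2 + ‖w‖ ^ 2) := by
  rw [EuclideanSpace.norm_eq]
  congr 1
  have hx : ‖x‖ ^ 2 = x 0 ^ 2 + x 1 ^ 2 + x 2 ^ 2 := by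
    rw [EuclideanSpace.norm_eq, Real.sq_sqrt (by positivity)]
    simp [Fin.sum_univ_three, sq_abs]
  have hw : ‖w‖ ^ 2 = w.re ^ 2 + w.im ^ 2 := by
    rw [Complex.sq_norm, Complex.normSq_apply]; ring
  simp only [Fin.sum_univ_five, Real.norm_eq_abs, sq_abs, emb, WithLp.equiv_symm_apply, PiLp.toLp_apply]
  norm_num
  change x 0 ^ 2 + x 1 ^ 2 + x 2 ^ 2 + w.re ^ 2 + w.im ^ 2 = _
  nlinarith [hx, hw]

/-- The normalized embedding `ℝ³ × ℂ → ℝ⁵`, mapping into the unit sphere. -/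
noncomputable def nEmb (x : EuclideanSpace ℝ (Fin 3)) (w : ℂ) : EuclideanSpace ℝ (Fin 5) :=
  (Real.sqrt (‖x‖ ^ 2 + ‖w‖ ^ 2))⁻¹ • emb x w

lemma nEmb_mem {x : EuclideanSpace ℝ (Fin 3)} {w : ℂ}
    (h : 0 < ‖x‖ ^ 2 + ‖w‖ ^ 2) : nEmb x w ∈ S4 := by
  have hs : 0 < Real.sqrt (‖x‖ ^ 2 + ‖w‖ ^ 2) := Real.sqrt_pos.mpr h
  show nEmb x w ∈ Metric.sphere 0 1
  rw [mem_sphere_zero_iff_norm, nEmb, norm_smul, norm_emb, norm_inv, Real.norm_eq_abs,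
    abs_of_pos hs]
  exact inv_mul_cancel₀ hs.ne'

lemma nEmb_eq {x x' : EuclideanSpace ℝ (Fin 3)} {w w' : ℂ}
    (h : nEmb x w = nEmb x' w') :
    (Real.sqrt (‖x‖ ^ 2 + ‖w‖ ^ 2))⁻¹ • x = (Real.sqrt (‖x'‖ ^ 2 + ‖w'‖ ^ 2))⁻¹ • x' ∧
    (Real.sqrt (‖x‖ ^ 2 + ‖w‖ ^ 2))⁻¹ • w = (Real.sqrt (‖x'‖ ^ 2 + ‖w'‖ ^ 2))⁻¹ • w' := by
  rw [nEmb, nEmb, ← emb_smul, ← emb_smul] at h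
  exact emb_inj h

end GluckAux

/-- Gluck's twist, as a map in the category of topological spaces. -/
noncomputable def gHom : TopCat.of (↥S2 × ↥S1) ⟶ TopCat.of (↥S2 × ↥S1) :=
  TopCat.ofHom ⟨gluckTwist, continuous_gluckTwist⟩

/-- The boundary inclusion `S² × S¹ → B³ × S¹` induced by `S² = ∂B³ ⊆ B³`. -/
noncomputable def j1 : TopCat.of (↥S2 × ↥S1) ⟶ TopCat.of (↥B3 × ↥S1) :=
  TopCat.ofHom ⟨fun p => (⟨p.1.1, Metric.sphere_subset_closedBall p.1.2⟩, p.2), by continuity⟩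

/-- The boundary inclusion `S² × S¹ → S² × D²` induced by `S¹ = ∂D² ⊆ D²`. -/
noncomputable def j2 : TopCat.of (↥S2 × ↥S1) ⟶ TopCat.of (↥S2 × ↥D2) :=
  TopCat.ofHom ⟨fun p => (p.1, ⟨p.2.1, Metric.sphere_subset_closedBall p.2.2⟩), by continuity⟩


/-! ### The two pieces of the homeomorphism to `S⁴` -/

section GluckMaps

lemma continuous_emb : Continuous fun p : EuclideanSpace ℝ (Fin 3) × ℂ => emb p.1 p.2 := by
  refine (PiLp.continuous_toLp 2 (fun _ : Fin 5 => ℝ)).comp ?_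
  refine continuous_pi fun i => ?_
  have hx : ∀ j : Fin 3, Continuous fun p : EuclideanSpace ℝ (Fin 3) × ℂ => p.1 j :=
    fun j => (continuous_apply j).comp
      ((PiLp.continuous_ofLp 2 (fun _ : Fin 3 => ℝ)).comp continuous_fst)
  fin_cases i <;> simp [emb] <;> fun_prop

lemma continuous_rot : Continuous fun p : ℂ × EuclideanSpace ℝ (Fin 3) => rot p.1 p.2 := by
  refine (PiLp.continuous_toLp 2 (fun _ : Fin 3 => ℝ)).comp ?_
  refine continuous_pi fun i => ?_
  have hx : ∀ j : Fin 3, Continuous fun p : ℂ × EuclideanSpace ℝ (Fin 3) => p.2 j :=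
    fun j => (continuous_apply j).comp
      ((PiLp.continuous_ofLp 2 (fun _ : Fin 3 => ℝ)).comp continuous_snd)
  fin_cases i <;> simp [rot] <;> fun_prop

lemma continuous_nEmb {X : Type*} [TopologicalSpace X] {f : X → EuclideanSpace ℝ (Fin 3)}
    {g : X → ℂ} (hf : Continuous f) (hg : Continuous g)
    (h : ∀ a, 0 < ‖f a‖ ^ 2 + ‖g a‖ ^ 2) :
    Continuous fun a => nEmb (f a) (g a) := by
  refine Continuous.smul (Continuous.inv₀ (Real.continuous_sqrt.comp (by fun_prop)) ?_)
    (continuous_emb.comp (hf.prodMk hg))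
  intro a
  exact (Real.sqrt_pos.mpr (h a)).ne'

/-- The first piece: `B³ × S¹ → S⁴`, `(x, z) ↦ (R(z)⁻¹ x, z) / √(‖x‖² + 1)`. -/
noncomputable def K1fun : ↥B3 × ↥S1 → ↥S4 := fun p =>
  ⟨nEmb (rot ((starRingEnd ℂ) p.2.1) p.1.1) p.2.1, by
    apply nEmb_mem
    have hz : ‖(p.2 : ℂ)‖ = 1 := mem_sphere_zero_iff_norm.mp p.2.2
    rw [hz]
    positivity⟩

/-- The second piece: `S² × D² → S⁴`, `(x, w) ↦ (x, w) / √(1 + ‖w‖²)`. -/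
noncomputable def K2fun : ↥S2 × ↥D2 → ↥S4 := fun p =>
  ⟨nEmb p.1.1 p.2.1, by
    apply nEmb_mem
    have hx : ‖(p.1 : EuclideanSpace ℝ (Fin 3))‖ = 1 := mem_sphere_zero_iff_norm.mp p.1.2
    rw [hx]
    positivity⟩

lemma continuous_K1fun : Continuous K1fun := by
  refine Continuous.subtype_mk ?_ _
  refine continuous_nEmb ?_ ?_ ?_
  · exact continuous_rot.comp
      ((Complex.continuous_conj.comp (continuous_subtype_val.comp continuous_snd)).prodMk
        (continuous_subtype_val.comp continuous_fst))
  · exact continuous_subtype_val.comp continuous_snd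
  · intro p
    have hz : ‖(p.2 : ℂ)‖ = 1 := mem_sphere_zero_iff_norm.mp p.2.2
    rw [hz]
    positivity

lemma continuous_K2fun : Continuous K2fun := by
  refine Continuous.subtype_mk ?_ _
  refine continuous_nEmb (continuous_subtype_val.comp continuous_fst)
    (continuous_subtype_val.comp continuous_snd) ?_
  intro p
  have hx : ‖(p.1 : EuclideanSpace ℝ (Fin 3))‖ = 1 := mem_sphere_zero_iff_norm.mp p.1.2
  rw [hx]
  positivity

end GluckMaps


section GluckInj

lemma norm_conj_one {z : ℂ} (hz : ‖z‖ = 1) : ‖(starRingEnd ℂ) z‖ = 1 := by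
  rw [RCLike.norm_conj]; exact hz

lemma K1fun_inj : Function.Injective K1fun := by
  rintro ⟨⟨x, hx⟩, ⟨z, hz⟩⟩ ⟨⟨x', hx'⟩, ⟨z', hz'⟩⟩ h
  have hz1 : ‖z‖ = 1 := mem_sphere_zero_iff_norm.mp hz
  have hz1' : ‖z'‖ = 1 := mem_sphere_zero_iff_norm.mp hz'
  have hsub : nEmb (rot ((starRingEnd ℂ) z) x) z = nEmb (rot ((starRingEnd ℂ) z') x') z' :=
    congrArg Subtype.val h
  obtain ⟨h1, h2⟩ := nEmb_eq hsub
  rw [norm_rot (norm_conj_one hz1), norm_rot (norm_conj_one hz1'), hz1, hz1'] at h1 h2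
  have hr : 0 < Real.sqrt (‖x‖ ^ 2 + (1 : ℝ) ^ 2) := Real.sqrt_pos.mpr (by positivity)
  have hr' : 0 < Real.sqrt (‖x'‖ ^ 2 + (1 : ℝ) ^ 2) := Real.sqrt_pos.mpr (by positivity)
  have hn2 := congrArg norm h2
  rw [norm_smul, norm_smul, hz1, hz1', mul_one, mul_one, Real.norm_eq_abs, Real.norm_eq_abs,
    abs_of_pos (inv_pos.mpr hr), abs_of_pos (inv_pos.mpr hr')] at hn2
  have hrr : Real.sqrt (‖x‖ ^ 2 + (1 : ℝ) ^ 2) = Real.sqrt (‖x'‖ ^ 2 + (1 : ℝ) ^ 2) :=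
    inv_injective hn2
  rw [← hrr] at h1 h2
  have hzz : z = z' := smul_right_injective _ (inv_ne_zero hr.ne') h2
  have hxx' : rot ((starRingEnd ℂ) z) x = rot ((starRingEnd ℂ) z') x' :=
    smul_right_injective _ (inv_ne_zero hr.ne') h1
  rw [← hzz] at hxx'
  have hxx : x = x' := by
    have := congrArg (rot z) hxx'
    rwa [rot_rot_conj hz1, rot_rot_conj hz1] at this
  subst hzz hxx
  rfl

lemma K2fun_inj : Function.Injective K2fun := by
  rintro ⟨⟨x, hx⟩, ⟨w, hw⟩⟩ ⟨⟨x', hx'⟩, ⟨w', hw'⟩⟩ h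
  have hx1 : ‖x‖ = 1 := mem_sphere_zero_iff_norm.mp hx
  have hx1' : ‖x'‖ = 1 := mem_sphere_zero_iff_norm.mp hx'
  have hsub : nEmb x w = nEmb x' w' := congrArg Subtype.val h
  obtain ⟨h1, h2⟩ := nEmb_eq hsub
  rw [hx1, hx1'] at h1 h2
  have hr : 0 < Real.sqrt ((1 : ℝ) ^ 2 + ‖w‖ ^ 2) := Real.sqrt_pos.mpr (by positivity)
  have hr' : 0 < Real.sqrt ((1 : ℝ) ^ 2 + ‖w'‖ ^ 2) := Real.sqrt_pos.mpr (by positivity)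
  have hn1 := congrArg norm h1
  rw [norm_smul, norm_smul, hx1, hx1', mul_one, mul_one, Real.norm_eq_abs, Real.norm_eq_abs,
    abs_of_pos (inv_pos.mpr hr), abs_of_pos (inv_pos.mpr hr')] at hn1
  have hww : ‖w‖ = ‖w'‖ := by
    have h0 := (Real.sqrt_inj (by positivity) (by positivity)).mp (inv_injective hn1)
    nlinarith [norm_nonneg w, norm_nonneg w']
  rw [← hww] at h1 h2
  have e1 : x = x' := smul_right_injective _ (inv_ne_zero hr.ne') h1
  have e2 : w = w' := smul_right_injective _ (inv_ne_zero hr.ne') h2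
  subst e1 e2
  rfl

lemma Kmix {u : ↥B3 × ↥S1} {v : ↥S2 × ↥D2} (h : K1fun u = K2fun v) :
    ∃ p : ↥S2 × ↥S1, j1 (gluckTwist p) = u ∧ j2 p = v := by
  obtain ⟨⟨x, hx⟩, ⟨z, hz⟩⟩ := u
  obtain ⟨⟨x', hx'⟩, ⟨w, hw⟩⟩ := v
  have hz1 : ‖z‖ = 1 := mem_sphere_zero_iff_norm.mp hz
  have hx1' : ‖x'‖ = 1 := mem_sphere_zero_iff_norm.mp hx'
  have hxle : ‖x‖ ≤ 1 := mem_closedBall_zero_iff.mp hx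
  have hwle : ‖w‖ ≤ 1 := mem_closedBall_zero_iff.mp hw
  have hsub : nEmb (rot ((starRingEnd ℂ) z) x) z = nEmb x' w := congrArg Subtype.val h
  obtain ⟨h1, h2⟩ := nEmb_eq hsub
  rw [norm_rot (norm_conj_one hz1), hz1, hx1'] at h1 h2
  have hr : 0 < Real.sqrt (‖x‖ ^ 2 + (1 : ℝ) ^ 2) := Real.sqrt_pos.mpr (by positivity)
  have hs : 0 < Real.sqrt ((1 : ℝ) ^ 2 + ‖w‖ ^ 2) := Real.sqrt_pos.mpr (by positivity)
  -- norms of the two component equations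
  have hn1 := congrArg norm h1
  rw [norm_smul, norm_smul, norm_rot (norm_conj_one hz1), hx1', mul_one, Real.norm_eq_abs,
    Real.norm_eq_abs, abs_of_pos (inv_pos.mpr hr), abs_of_pos (inv_pos.mpr hs)] at hn1
  have hn2 := congrArg norm h2
  rw [norm_smul, norm_smul, hz1, mul_one, Real.norm_eq_abs, Real.norm_eq_abs,
    abs_of_pos (inv_pos.mpr hr), abs_of_pos (inv_pos.mpr hs)] at hn2
  -- conclude both boundary conditions ‖x‖ = 1 and ‖w‖ = 1
  have hra : 0 < (Real.sqrt (‖x‖ ^ 2 + (1 : ℝ) ^ 2))⁻¹ := inv_pos.mpr hr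
  have hsa : 0 < (Real.sqrt ((1 : ℝ) ^ 2 + ‖w‖ ^ 2))⁻¹ := inv_pos.mpr hs
  have hxn1 : ‖x‖ = 1 := by nlinarith [hn1, hn2, hra, hsa, hxle, hwle, norm_nonneg x, norm_nonneg w]
  have hwn1 : ‖w‖ = 1 := by nlinarith [hn1, hn2, hra, hsa, hxle, hwle, norm_nonneg x, norm_nonneg w]
  have hrs : Real.sqrt (‖x‖ ^ 2 + (1 : ℝ) ^ 2) = Real.sqrt ((1 : ℝ) ^ 2 + ‖w‖ ^ 2) := by
    rw [hxn1, hwn1]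
  rw [← hrs] at h1 h2
  have hzw : z = w := smul_right_injective _ (inv_ne_zero hr.ne') h2
  have hxx' : rot ((starRingEnd ℂ) z) x = x' := smul_right_injective _ (inv_ne_zero hr.ne') h1
  refine ⟨(⟨x', hx'⟩, ⟨z, hz⟩), ?_, ?_⟩
  · show ((⟨rot z x', _⟩ : ↥B3), (⟨z, hz⟩ : ↥S1)) = _
    refine Prod.ext (Subtype.ext ?_) rfl
    show rot z x' = x
    rw [← hxx', rot_rot_conj hz1]
  · show ((⟨x', hx'⟩ : ↥S2), (⟨z, _⟩ : ↥D2)) = _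
    exact Prod.ext rfl (Subtype.ext hzw)

end GluckInj


section GluckSurj

set_option maxHeartbeats 1000000 in
lemma Ksurj (y : ↥S4) : (∃ u, K1fun u = y) ∨ (∃ v, K2fun v = y) := by
  obtain ⟨yv, hy⟩ := y
  set x0 : EuclideanSpace ℝ (Fin 3) := (WithLp.equiv 2 (Fin 3 → ℝ)).symm ![yv 0, yv 1, yv 2]
    with hx0
  set w0 : ℂ := ⟨yv 3, yv 4⟩ with hw0
  have hemb : emb x0 w0 = yv := by
    ext i
    fin_cases i <;> simp [emb, hx0, hw0, WithLp.equiv_symm_apply, PiLp.toLp_apply]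
  have hyn : ‖yv‖ = 1 := mem_sphere_zero_iff_norm.mp hy
  have hsum : ‖x0‖ ^ 2 + ‖w0‖ ^ 2 = 1 := by
    have h1 : Real.sqrt (‖x0‖ ^ 2 + ‖w0‖ ^ 2) = 1 := by rw [← norm_emb, hemb, hyn]
    have := Real.sq_sqrt (show (0 : ℝ) ≤ ‖x0‖ ^ 2 + ‖w0‖ ^ 2 by positivity)
    rw [h1] at this
    nlinarith [this]
  by_cases hc : ‖x0‖ ≤ ‖w0‖
  · -- the `B³ × S¹` piece covers `y`
    left
    have ht : 0 < ‖w0‖ := by nlinarith [norm_nonneg x0, norm_nonneg w0]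
    set t : ℝ := ‖w0‖ with htdef
    set x : EuclideanSpace ℝ (Fin 3) := t⁻¹ • x0 with hxdef
    set z : ℂ := t⁻¹ • w0 with hzdef
    have hxn : ‖x‖ ≤ 1 := by
      rw [hxdef, norm_smul, Real.norm_eq_abs, abs_of_pos (inv_pos.mpr ht)]
      rw [inv_mul_le_iff₀ ht, mul_one]
      exact hc
    have hzn : ‖z‖ = 1 := by
      rw [hzdef, norm_smul, Real.norm_eq_abs, abs_of_pos (inv_pos.mpr ht), ← htdef,
        inv_mul_cancel₀ ht.ne']
    have hrot : ‖rot z x‖ ≤ 1 := by rw [norm_rot hzn]; exact hxn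
    refine ⟨(⟨rot z x, mem_closedBall_zero_iff.mpr hrot⟩, ⟨z, mem_sphere_zero_iff_norm.mpr hzn⟩),
      ?_⟩
    apply Subtype.ext
    show nEmb (rot ((starRingEnd ℂ) z) (rot z x)) z = yv
    rw [rot_conj_rot hzn]
    have hscale : ‖x‖ ^ 2 + ‖z‖ ^ 2 = (t⁻¹) ^ 2 := by
      rw [hzn, hxdef, norm_smul, Real.norm_eq_abs, abs_of_pos (inv_pos.mpr ht)]
      have : ‖x0‖ ^ 2 = 1 - t ^ 2 := by rw [htdef] at hsum ⊢; nlinarith [hsum]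
      field_simp
      nlinarith [this, ht]
    show (Real.sqrt (‖x‖ ^ 2 + ‖z‖ ^ 2))⁻¹ • emb x z = yv
    rw [hscale, Real.sqrt_sq (le_of_lt (inv_pos.mpr ht)), hxdef, hzdef, emb_smul, hemb, inv_inv,
      smul_smul, mul_inv_cancel₀ ht.ne', one_smul]
  · -- the `S² × D²` piece covers `y`
    right
    push_neg at hc
    have ht : 0 < ‖x0‖ := lt_of_le_of_lt (norm_nonneg w0) hc
    set t : ℝ := ‖x0‖ with htdef
    set x : EuclideanSpace ℝ (Fin 3) := t⁻¹ • x0 with hxdef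
    set w : ℂ := t⁻¹ • w0 with hwdef
    have hxn : ‖x‖ = 1 := by
      rw [hxdef, norm_smul, Real.norm_eq_abs, abs_of_pos (inv_pos.mpr ht), ← htdef,
        inv_mul_cancel₀ ht.ne']
    have hwn : ‖w‖ ≤ 1 := by
      rw [hwdef, norm_smul, Real.norm_eq_abs, abs_of_pos (inv_pos.mpr ht)]
      rw [inv_mul_le_iff₀ ht, mul_one]
      exact le_of_lt hc
    refine ⟨(⟨x, mem_sphere_zero_iff_norm.mpr hxn⟩, ⟨w, mem_closedBall_zero_iff.mpr hwn⟩), ?_⟩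
    apply Subtype.ext
    show nEmb x w = yv
    have hscale : ‖x‖ ^ 2 + ‖w‖ ^ 2 = (t⁻¹) ^ 2 := by
      rw [hxn, hwdef, norm_smul, Real.norm_eq_abs, abs_of_pos (inv_pos.mpr ht)]
      have : ‖w0‖ ^ 2 = 1 - t ^ 2 := by rw [htdef] at hsum ⊢; nlinarith [hsum]
      field_simp
      nlinarith [this, ht]
    show (Real.sqrt (‖x‖ ^ 2 + ‖w‖ ^ 2))⁻¹ • emb x w = yv
    rw [hscale, Real.sqrt_sq (le_of_lt (inv_pos.mpr ht)), hxdef, hwdef, emb_smul, hemb, inv_inv,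
      smul_smul, mul_inv_cancel₀ ht.ne', one_smul]

end GluckSurj


section GluckMain

/-- The two pieces as morphisms in `TopCat`. -/
noncomputable def K1h : TopCat.of (↥B3 × ↥S1) ⟶ TopCat.of ↥S4 := TopCat.ofHom ⟨K1fun, continuous_K1fun⟩

noncomputable def K2h : TopCat.of (↥S2 × ↥D2) ⟶ TopCat.of ↥S4 := TopCat.ofHom ⟨K2fun, continuous_K2fun⟩

lemma Kcomm : (gHom ≫ j1) ≫ K1h = j2 ≫ K2h := by
  ext p : 1
  show K1fun (j1 (gluckTwist p)) = K2fun (j2 p)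
  apply Subtype.ext
  have hz : ‖(p.2 : ℂ)‖ = 1 := mem_sphere_zero_iff_norm.mp p.2.2
  show nEmb (rot ((starRingEnd ℂ) (p.2 : ℂ)) (rot (p.2 : ℂ) (p.1 : EuclideanSpace ℝ (Fin 3))))
      (p.2 : ℂ) = nEmb (p.1 : EuclideanSpace ℝ (Fin 3)) (p.2 : ℂ)
  rw [rot_conj_rot hz]

lemma pushout_rep (a : ↑(pushout (gHom ≫ j1) j2 : TopCat)) :
    (∃ u, pushout.inl (gHom ≫ j1) j2 u = a) ∨ (∃ v, pushout.inr (gHom ≫ j1) j2 v = a) := by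
  obtain ⟨j, y, hy⟩ := Concrete.colimit_exists_rep (span (gHom ≫ j1) j2) a
  rcases j with _ | (_ | _)
  · left
    have hw := colimit.w (span (gHom ≫ j1) j2) WalkingSpan.Hom.fst
    have := ConcreteCategory.congr_hom hw y
    refine ⟨(gHom ≫ j1) y, ?_⟩
    rw [← hy, ← this]
    rfl
  · left; exact ⟨y, hy⟩
  · right; exact ⟨y, hy⟩

end GluckMain

/-- Re-gluing the standard decomposition of `S⁴` by the Gluck twist of
`S² × S¹` again yields a space homeomorphic to the 4-sphere: the pushout of
`(j₁ ∘ g, j₂)` is homeomorphic to `S⁴`. -/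
theorem gluck_reglued_sphere4 :
    Nonempty ((pushout (gHom ≫ j1) j2 : TopCat) ≃ₜ ↥S4) := by
  haveI : CompactSpace ↥B3 := isCompact_iff_compactSpace.mp (isCompact_closedBall 0 1)
  haveI : CompactSpace ↥S2 := isCompact_iff_compactSpace.mp (isCompact_sphere 0 1)
  haveI : CompactSpace ↥S1 := isCompact_iff_compactSpace.mp (isCompact_sphere 0 1)
  haveI : CompactSpace ↥D2 := isCompact_iff_compactSpace.mp (isCompact_closedBall 0 1)
  set F := pushout.desc K1h K2h Kcomm with hFdef
  have e1 : ∀ u, F (pushout.inl (gHom ≫ j1) j2 u) = K1fun u := by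
    intro u
    exact ConcreteCategory.congr_hom (pushout.inl_desc K1h K2h Kcomm) u
  have e2 : ∀ v, F (pushout.inr (gHom ≫ j1) j2 v) = K2fun v := by
    intro v
    exact ConcreteCategory.congr_hom (pushout.inr_desc K1h K2h Kcomm) v
  have hglue : ∀ p : ↥S2 × ↥S1,
      pushout.inl (gHom ≫ j1) j2 (j1 (gluckTwist p)) = pushout.inr (gHom ≫ j1) j2 (j2 p) := by
    intro p
    exact ConcreteCategory.congr_hom (pushout.condition (f := gHom ≫ j1) (g := j2)) p
  have hbij : Function.Bijective F := by
    constructor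
    · intro a b hab
      rcases pushout_rep a with ⟨u, rfl⟩ | ⟨v, rfl⟩ <;>
        rcases pushout_rep b with ⟨u', rfl⟩ | ⟨v', rfl⟩
      · rw [e1, e1] at hab
        rw [K1fun_inj hab]
      · rw [e1, e2] at hab
        obtain ⟨p, hp1, hp2⟩ := Kmix hab
        rw [← hp1, ← hp2, hglue]
      · rw [e2, e1] at hab
        obtain ⟨p, hp1, hp2⟩ := Kmix hab.symm
        rw [← hp1, ← hp2, hglue]
      · rw [e2, e2] at hab
        rw [K2fun_inj hab]
    · intro y
      rcases Ksurj y with ⟨u, hu⟩ | ⟨v, hv⟩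
      · exact ⟨pushout.inl (gHom ≫ j1) j2 u, by rw [e1, hu]⟩
      · exact ⟨pushout.inr (gHom ≫ j1) j2 v, by rw [e2, hv]⟩
  haveI : CompactSpace ↑(TopCat.of (↥B3 × ↥S1)) := inferInstanceAs (CompactSpace (↥B3 × ↥S1))
  haveI : CompactSpace ↑(TopCat.of (↥S2 × ↥D2)) := inferInstanceAs (CompactSpace (↥S2 × ↥D2))
  haveI : CompactSpace ↑(pushout (gHom ≫ j1) j2 : TopCat) := by
    rw [← isCompact_univ_iff]
    have huniv : (Set.univ : Set ↑(pushout (gHom ≫ j1) j2 : TopCat)) =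
        Set.range (pushout.inl (gHom ≫ j1) j2) ∪ Set.range (pushout.inr (gHom ≫ j1) j2) := by
      ext a
      simp only [Set.mem_univ, Set.mem_union, Set.mem_range, true_iff]
      exact pushout_rep a
    rw [huniv]
    exact (isCompact_range (pushout.inl (gHom ≫ j1) j2).hom.continuous).union
      (isCompact_range (pushout.inr (gHom ≫ j1) j2).hom.continuous)
  exact ⟨Continuous.homeoOfEquivCompactToT2 (f := Equiv.ofBijective _ hbij) F.hom.continuous⟩
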